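/- For any a > 0 and b ∈ ℝ, the function F(x) = a x + b + sqrt(a/(2t(x))) q(t(x)) with t(x) = (a/2)(x + b/a)² satisfies F''' + F F'' = 0 on {x : x > −b/a} if and only if q satisfies q''' + (1 + q/(2t)) q'' + (−1/(2t) + 3/(4t²) − q/(4t²)) q' + (1/(2t²) − 3/(4t³)) q + q²/(4t³) = 0 on the corresponding t-domain. -/

import Mathlib

open Set

set_option maxHeartbeats 1000000

/-- The change of variables `t = (a/2)(x+b/a)²`, `F = ax + b + √(a/(2t)) q(t)` turns the
Blasius equation on `{x > -b/a}` into the far-field equation (14.2) for `q` on `t > 0`. -/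
theorem stmt_10 (a b : ℝ) (ha : 0 < a) (q : ℝ → ℝ)
    (hq : ContDiffOn ℝ 3 q (Ioi 0)) (F t : ℝ → ℝ)
    (ht : ∀ x, t x = a / 2 * (x + b / a) ^ 2)
    (hF : ∀ x, F x = a * x + b + Real.sqrt (a / (2 * t x)) * q (t x)) :
    (∀ x > -b / a, deriv^[3] F x + F x * deriv^[2] F x = 0) ↔
    (∀ s > (0 : ℝ),
      deriv^[3] q s + (1 + q s / (2 * s)) * deriv^[2] q s +
        (-1 / (2 * s) + 3 / (4 * s ^ 2) - q s / (4 * s ^ 2)) * deriv q s +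
        (1 / (2 * s ^ 2) - 3 / (4 * s ^ 3)) * q s + (q s) ^ 2 / (4 * s ^ 3) = 0) := by
  have ha' : a ≠ 0 := ne_of_gt ha
  have h2it : deriv^[2] q = deriv (deriv q) := by
    simp [Function.iterate_succ', Function.comp]
  have h3it : deriv^[3] q = deriv (deriv (deriv q)) := by
    simp [Function.iterate_succ', Function.comp]
  have hq1 : ContDiffOn ℝ 2 (deriv q) (Ioi 0) :=
    hq.deriv_of_isOpen isOpen_Ioi (by norm_num)
  have hq2 : ContDiffOn ℝ 1 (deriv (deriv q)) (Ioi 0) :=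
    hq1.deriv_of_isOpen isOpen_Ioi (by norm_num)
  have hQ0 : ∀ s : ℝ, 0 < s → HasDerivAt q (deriv q s) s := fun s hs =>
    ((hq.differentiableOn (by norm_num)).differentiableAt
      (isOpen_Ioi.mem_nhds hs)).hasDerivAt
  have hQ1 : ∀ s : ℝ, 0 < s → HasDerivAt (deriv q) (deriv (deriv q) s) s := fun s hs =>
    ((hq1.differentiableOn (by norm_num)).differentiableAt
      (isOpen_Ioi.mem_nhds hs)).hasDerivAt
  have hQ2 : ∀ s : ℝ, 0 < s → HasDerivAt (deriv (deriv q)) (deriv (deriv (deriv q)) s) s :=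
    fun s hs =>
    ((hq2.differentiableOn (by norm_num)).differentiableAt
      (isOpen_Ioi.mem_nhds hs)).hasDerivAt
  -- positivity of u = x + b/a on the domain
  have hu : ∀ y ∈ Ioi (-b / a), 0 < y + b / a := by
    intro y hy
    have h := mem_Ioi.mp hy
    rw [neg_div] at h
    linarith
  have hts : ∀ y ∈ Ioi (-b / a), 0 < t y := by
    intro y hy
    have := hu y hy
    rw [ht]
    positivity
  -- derivative of t
  have hT : ∀ y : ℝ, HasDerivAt t (a * (y + b / a)) y := by
    intro y
    rw [show t = fun z => a / 2 * (z + b / a) ^ 2 from funext ht]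
    have h1 := (((hasDerivAt_id y).add_const (b / a)).pow 2).const_mul (a / 2)
    simp only [Pi.pow_apply, id_eq] at h1
    refine h1.congr_deriv ?_
    push_cast
    ring
  -- F equals the simplified expression on the domain
  have hFeq : ∀ y ∈ Ioi (-b / a), F y = a * y + b + q (t y) * (y + b / a)⁻¹ := by
    intro y hy
    have huy := hu y hy
    have hune : y + b / a ≠ 0 := ne_of_gt huy
    rw [hF, ht]
    set u := y + b / a with hudef
    have hval : a / (2 * (a / 2 * u ^ 2)) = (u⁻¹) ^ 2 := by
      rw [show (2 : ℝ) * (a / 2 * u ^ 2) = a * u ^ 2 by ring]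
      rw [div_eq_iff (by positivity)]
      field_simp
    rw [hval, Real.sqrt_sq (by positivity)]
    ring
  -- first derivative
  have hDF : ∀ y ∈ Ioi (-b / a),
      HasDerivAt F (a + a * deriv q (t y) - q (t y) / (y + b / a) ^ 2) y := by
    intro y hy
    have huy := hu y hy
    have hsy := hts y hy
    have hqt : HasDerivAt (fun z => q (t z)) (deriv q (t y) * (a * (y + b / a))) y :=
      (hQ0 (t y) hsy).comp y (hT y)
    have hinv : HasDerivAt (fun z : ℝ => (z + b / a)⁻¹) (-1 / (y + b / a) ^ 2) y := by
      have := ((hasDerivAt_id y).add_const (b / a)).inv (ne_of_gt huy)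
      simpa [Pi.inv_def, Pi.pow_def] using this
    have hprod := hqt.mul hinv
    have hlin : HasDerivAt (fun z : ℝ => a * z + b) a y := by
      simpa using ((hasDerivAt_id y).const_mul a).add_const b
    have hsum := hlin.add hprod
    have hE : F =ᶠ[nhds y] fun z => a * z + b + q (t z) * (z + b / a)⁻¹ :=
      Filter.eventuallyEq_of_mem (isOpen_Ioi.mem_nhds hy) fun z hz => hFeq z hz
    have hfinal := hsum.congr_of_eventuallyEq hE
    have hune : y + b / a ≠ 0 := ne_of_gt huy
    set u := y + b / a with hudef
    refine hfinal.congr_deriv ?_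
    field_simp
    ring
  have hd1 : ∀ y ∈ Ioi (-b / a),
      deriv F y = a + a * deriv q (t y) - q (t y) / (y + b / a) ^ 2 :=
    fun y hy => (hDF y hy).deriv
  -- second derivative
  have hDF1 : ∀ y ∈ Ioi (-b / a),
      HasDerivAt (fun z => a + a * deriv q (t z) - q (t z) / (z + b / a) ^ 2)
        (a ^ 2 * (y + b / a) * deriv (deriv q) (t y) + 2 * q (t y) / (y + b / a) ^ 3
          - a * deriv q (t y) / (y + b / a)) y := by
    intro y hy
    have huy := hu y hy
    have hsy := hts y hy
    have hqt : HasDerivAt (fun z => q (t z)) (deriv q (t y) * (a * (y + b / a))) y :=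
      (hQ0 (t y) hsy).comp y (hT y)
    have hq't : HasDerivAt (fun z => deriv q (t z))
        (deriv (deriv q) (t y) * (a * (y + b / a))) y :=
      (hQ1 (t y) hsy).comp y (hT y)
    have hpow : HasDerivAt (fun z : ℝ => (z + b / a) ^ 2) (2 * (y + b / a)) y := by
      have := ((hasDerivAt_id y).add_const (b / a)).pow 2
      simpa [Pi.inv_def, Pi.pow_def] using this
    have hinv2 : HasDerivAt (fun z : ℝ => ((z + b / a) ^ 2)⁻¹)
        (-(2 * (y + b / a)) / ((y + b / a) ^ 2) ^ 2) y := hpow.inv (by positivity)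
    have hA := hq't.const_mul a
    have hB := hqt.mul hinv2
    have hfinal := ((hasDerivAt_const y a).add hA).sub hB
    have hune : y + b / a ≠ 0 := ne_of_gt huy
    set u := y + b / a with hudef
    refine hfinal.congr_deriv ?_
    field_simp
    ring
  have hd2 : ∀ y ∈ Ioi (-b / a),
      deriv^[2] F y = a ^ 2 * (y + b / a) * deriv (deriv q) (t y)
        + 2 * q (t y) / (y + b / a) ^ 3 - a * deriv q (t y) / (y + b / a) := by
    intro y hy
    have heq : deriv F =ᶠ[nhds y]
        fun z => a + a * deriv q (t z) - q (t z) / (z + b / a) ^ 2 :=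
      Filter.eventuallyEq_of_mem (isOpen_Ioi.mem_nhds hy) fun z hz => hd1 z hz
    rw [show deriv^[2] F = deriv (deriv F) from by rw [Function.iterate_succ']; rfl]
    rw [heq.deriv_eq]
    exact (hDF1 y hy).deriv
  -- third derivative
  have hDF2 : ∀ y ∈ Ioi (-b / a),
      HasDerivAt (fun z => a ^ 2 * (z + b / a) * deriv (deriv q) (t z)
          + 2 * q (t z) / (z + b / a) ^ 3 - a * deriv q (t z) / (z + b / a))
        (a ^ 3 * (y + b / a) ^ 2 * deriv (deriv (deriv q)) (t y)
          + 3 * a * deriv q (t y) / (y + b / a) ^ 2 - 6 * q (t y) / (y + b / a) ^ 4) y := by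
    intro y hy
    have huy := hu y hy
    have hsy := hts y hy
    have hqt : HasDerivAt (fun z => q (t z)) (deriv q (t y) * (a * (y + b / a))) y :=
      (hQ0 (t y) hsy).comp y (hT y)
    have hq't : HasDerivAt (fun z => deriv q (t z))
        (deriv (deriv q) (t y) * (a * (y + b / a))) y :=
      (hQ1 (t y) hsy).comp y (hT y)
    have hq''t : HasDerivAt (fun z => deriv (deriv q) (t z))
        (deriv (deriv (deriv q)) (t y) * (a * (y + b / a))) y :=
      (hQ2 (t y) hsy).comp y (hT y)
    have hlin2 : HasDerivAt (fun z : ℝ => a ^ 2 * (z + b / a)) (a ^ 2) y := by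
      simpa using ((hasDerivAt_id y).add_const (b / a)).const_mul (a ^ 2)
    have hA := hlin2.mul hq''t
    have hpow3 : HasDerivAt (fun z : ℝ => (z + b / a) ^ 3) (3 * (y + b / a) ^ 2) y := by
      have := ((hasDerivAt_id y).add_const (b / a)).pow 3
      simpa [Pi.inv_def, Pi.pow_def] using this
    have hinv3 : HasDerivAt (fun z : ℝ => ((z + b / a) ^ 3)⁻¹)
        (-(3 * (y + b / a) ^ 2) / ((y + b / a) ^ 3) ^ 2) y := hpow3.inv (by positivity)
    have hB := (hqt.const_mul 2).mul hinv3
    have hinv : HasDerivAt (fun z : ℝ => (z + b / a)⁻¹) (-1 / (y + b / a) ^ 2) y := by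
      have := ((hasDerivAt_id y).add_const (b / a)).inv (ne_of_gt huy)
      simpa [Pi.inv_def, Pi.pow_def] using this
    have hC := (hq't.const_mul a).mul hinv
    have hfinal := (hA.add hB).sub hC
    have hune : y + b / a ≠ 0 := ne_of_gt huy
    set u := y + b / a with hudef
    refine hfinal.congr_deriv ?_
    field_simp
    ring
  have hd3 : ∀ y ∈ Ioi (-b / a),
      deriv^[3] F y = a ^ 3 * (y + b / a) ^ 2 * deriv (deriv (deriv q)) (t y)
        + 3 * a * deriv q (t y) / (y + b / a) ^ 2 - 6 * q (t y) / (y + b / a) ^ 4 := by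
    intro y hy
    have heq : deriv^[2] F =ᶠ[nhds y]
        fun z => a ^ 2 * (z + b / a) * deriv (deriv q) (t z)
          + 2 * q (t z) / (z + b / a) ^ 3 - a * deriv q (t z) / (z + b / a) :=
      Filter.eventuallyEq_of_mem (isOpen_Ioi.mem_nhds hy) fun z hz => hd2 z hz
    rw [show deriv^[3] F = deriv (deriv^[2] F) from by rw [Function.iterate_succ']; rfl]
    rw [heq.deriv_eq]
    exact (hDF2 y hy).deriv
  -- key identity
  have key : ∀ y ∈ Ioi (-b / a),
      deriv^[3] F y + F y * deriv^[2] F y =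
      2 * a ^ 2 * t y *
        (deriv (deriv (deriv q)) (t y) + (1 + q (t y) / (2 * t y)) * deriv (deriv q) (t y) +
          (-1 / (2 * t y) + 3 / (4 * (t y) ^ 2) - q (t y) / (4 * (t y) ^ 2)) * deriv q (t y) +
          (1 / (2 * (t y) ^ 2) - 3 / (4 * (t y) ^ 3)) * q (t y) +
          (q (t y)) ^ 2 / (4 * (t y) ^ 3)) := by
    intro y hy
    have huy := hu y hy
    have hune : y + b / a ≠ 0 := ne_of_gt huy
    rw [hd3 y hy, hd2 y hy, hFeq y hy, ht y]
    have hay : a * y + b = a * (y + b / a) := by field_simp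
    rw [hay]
    set u := y + b / a with hudef
    field_simp
    ring
  constructor
  · intro h s hs
    set x : ℝ := Real.sqrt (2 * s / a) - b / a with hxdef
    have hsq : 0 < Real.sqrt (2 * s / a) := Real.sqrt_pos.mpr (by positivity)
    have hx : x ∈ Ioi (-b / a) := by
      rw [mem_Ioi, neg_div]
      have : x + b / a = Real.sqrt (2 * s / a) := by rw [hxdef]; ring
      linarith [this ▸ hsq]
    have htx : t x = s := by
      rw [ht]
      have hxb : x + b / a = Real.sqrt (2 * s / a) := by rw [hxdef]; ring
      rw [hxb, Real.sq_sqrt (by positivity)]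
      field_simp
    have h0 := h x (mem_Ioi.mp hx)
    rw [key x hx, htx] at h0
    have hne : 2 * a ^ 2 * s ≠ 0 := by positivity
    have hE := (mul_eq_zero.mp h0).resolve_left hne
    rw [h3it, h2it]
    exact hE
  · intro h y hy
    rw [key y hy]
    have hEq := h (t y) (hts y hy)
    rw [h3it, h2it] at hEq
    rw [hEq, mul_zero]
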